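/- arXiv:2011.08263 — 2 statements merged into one kernel-verified Lean document; each statement's English description precedes it below -/
import Mathlib

section
/- Let H0, HM, Δ', Δ'' be Hermitian n×n complex matrices and let H be the 2n×2n block matrix [[H0 + HM, Δ' − iΔ''],[Δ' + iΔ'', −H0 + HM]]. If the smallest eigenvalues λ₊ and λ₋ of Δ' + HM and Δ' − HM respectively are both positive, then H has no eigenvalue E with −λ₋ < E < λ₊. -/
open Matrix

lemma quad_lower {m : ℕ} (A : Matrix (Fin m) (Fin m) ℂ) (hA : A.IsHermitian)
    (c : ℝ) (hc : ∀ i, c ≤ hA.eigenvalues i) (x : Fin m → ℂ) :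
    c * (star x ⬝ᵥ x).re ≤ (star x ⬝ᵥ A.mulVec x).re := by
  set U : Matrix (Fin m) (Fin m) ℂ := (hA.eigenvectorUnitary : Matrix (Fin m) (Fin m) ℂ) with hU
  set y : Fin m → ℂ := (star U).mulVec x with hy
  have hsxU : star y = star x ᵥ* U := by
    rw [hy, star_mulVec, ← star_eq_conjTranspose, star_star]
  have hUU : U * star U = 1 := (Matrix.mem_unitaryGroup_iff).mp hA.eigenvectorUnitary.2
  have hxx : star x ⬝ᵥ x = star y ⬝ᵥ y := by
    rw [hsxU, hy, ← dotProduct_mulVec, mulVec_mulVec, hUU, one_mulVec]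
  have hAx : star x ⬝ᵥ A.mulVec x
      = star y ⬝ᵥ (diagonal (RCLike.ofReal ∘ hA.eigenvalues)).mulVec y := by
    conv_lhs => rw [hA.spectral_theorem, Unitary.conjStarAlgAut_apply]
    rw [← mulVec_mulVec, ← mulVec_mulVec, dotProduct_mulVec, ← hsxU, hy]
  rw [hxx, hAx]
  have h1 : (star y ⬝ᵥ y).re = ∑ i, Complex.normSq (y i) := by
    simp [dotProduct, Complex.re_sum, Complex.mul_re, Complex.normSq_apply]
  have h2 : (star y ⬝ᵥ (diagonal (RCLike.ofReal ∘ hA.eigenvalues)).mulVec y).re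
      = ∑ i, hA.eigenvalues i * Complex.normSq (y i) := by
    simp [dotProduct, mulVec_diagonal, Complex.re_sum, Complex.mul_re, Complex.normSq_apply]
    exact Finset.sum_congr rfl fun i _ => by ring
  rw [h1, h2, Finset.mul_sum]
  exact Finset.sum_le_sum fun i _ =>
    mul_le_mul_of_nonneg_right (hc i) (Complex.normSq_nonneg _)

theorem stmt_3 {n : ℕ} (H0 HM Δ' Δ'' : Matrix (Fin n) (Fin n) ℂ)
    (hH0 : H0.IsHermitian) (hHM : HM.IsHermitian)
    (hΔ' : Δ'.IsHermitian) (hΔ'' : Δ''.IsHermitian)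
    (hp : (Δ' + HM).IsHermitian) (hm : (Δ' - HM).IsHermitian)
    (lp lm : ℝ)
    (hlp : lp = ⨅ i, hp.eigenvalues i) (hlm : lm = ⨅ i, hm.eigenvalues i)
    (hlp0 : 0 < lp) (hlm0 : 0 < lm)
    (H : Matrix (Fin (n + n)) (Fin (n + n)) ℂ)
    (hH : H = Matrix.reindex finSumFinEquiv finSumFinEquiv
      (Matrix.fromBlocks (H0 + HM) (Δ' - Complex.I • Δ'')
        (Δ' + Complex.I • Δ'') (-H0 + HM))) :
    ¬ ∃ (E : ℝ) (v : Fin (n + n) → ℂ), v ≠ 0 ∧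
      H.mulVec v = (E : ℂ) • v ∧ -lm < E ∧ E < lp := by
  rintro ⟨E, v, hv0, hveq, hE1, hE2⟩
  classical
  set w : Fin n ⊕ Fin n → ℂ := v ∘ finSumFinEquiv with hw
  set x : Fin n → ℂ := w ∘ Sum.inl with hx
  set y : Fin n → ℂ := w ∘ Sum.inr with hy
  have hwe : Sum.elim x y = w := Sum.elim_comp_inl_inr w
  have hmain : ∀ s, (fromBlocks (H0 + HM) (Δ' - Complex.I • Δ'')
      (Δ' + Complex.I • Δ'') (-H0 + HM)).mulVec (Sum.elim x y) s = (E : ℂ) • w s := by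
    intro s
    have h := congrFun hveq (finSumFinEquiv s)
    rw [hH] at h
    rw [hwe]
    simpa [Matrix.reindex_apply, Matrix.submatrix_mulVec_equiv, hw] using h
  have eq1 : (H0 + HM).mulVec x + (Δ' - Complex.I • Δ'').mulVec y = (E : ℂ) • x := by
    funext i
    have h := hmain (Sum.inl i)
    simpa [Matrix.fromBlocks_mulVec, ← hwe] using h
  have eq2 : (Δ' + Complex.I • Δ'').mulVec x + (-H0 + HM).mulVec y = (E : ℂ) • y := by
    funext i
    have h := hmain (Sum.inr i)
    simpa [Matrix.fromBlocks_mulVec, ← hwe] using h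
  set u : Fin n → ℂ := x + y with hu
  set z : Fin n → ℂ := x - y with hz
  have eqU : (Δ' + HM).mulVec u + (H0 + Complex.I • Δ'').mulVec z = (E : ℂ) • u := by
    have hL : (Δ' + HM).mulVec u + (H0 + Complex.I • Δ'').mulVec z
        = ((H0 + HM).mulVec x + (Δ' - Complex.I • Δ'').mulVec y)
          + ((Δ' + Complex.I • Δ'').mulVec x + (-H0 + HM).mulVec y) := by
      simp only [hu, hz, add_mulVec, sub_mulVec, neg_mulVec, mulVec_add, mulVec_sub,
        smul_mulVec]
      module
    rw [hL, eq1, eq2, ← smul_add, hu]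
  have eqZ : (H0 - Complex.I • Δ'').mulVec u - (Δ' - HM).mulVec z = (E : ℂ) • z := by
    have hL : (H0 - Complex.I • Δ'').mulVec u - (Δ' - HM).mulVec z
        = ((H0 + HM).mulVec x + (Δ' - Complex.I • Δ'').mulVec y)
          - ((Δ' + Complex.I • Δ'').mulVec x + (-H0 + HM).mulVec y) := by
      simp only [hu, hz, add_mulVec, sub_mulVec, neg_mulVec, mulVec_add, mulVec_sub,
        smul_mulVec]
      module
    rw [hL, eq1, eq2, ← smul_sub, hz]
  set a : ℝ := (star u ⬝ᵥ u).re with ha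
  set b : ℝ := (star z ⬝ᵥ z).re with hb
  -- conjugate relation
  have hKH : (H0 + Complex.I • Δ'')ᴴ = H0 - Complex.I • Δ'' := by
    rw [conjTranspose_add, conjTranspose_smul, hH0.eq, hΔ''.eq]
    simp [sub_eq_add_neg, Complex.conj_I, neg_smul]
  have hconj : (star z ⬝ᵥ (H0 - Complex.I • Δ'').mulVec u).re
      = (star u ⬝ᵥ (H0 + Complex.I • Δ'').mulVec z).re := by
    rw [← hKH]
    have : star z ⬝ᵥ (H0 + Complex.I • Δ'')ᴴ.mulVec u
        = star (star u ⬝ᵥ (H0 + Complex.I • Δ'').mulVec z) := by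
      rw [← star_dotProduct, star_mulVec, dotProduct_mulVec]
    rw [this, Complex.star_def]
    exact Complex.conj_re _
  have c1 : (star u ⬝ᵥ (Δ' + HM).mulVec u).re
        + (star u ⬝ᵥ (H0 + Complex.I • Δ'').mulVec z).re = E * a := by
    have h := congrArg (fun t => (star u ⬝ᵥ t).re) eqU
    simpa [dotProduct_add, dotProduct_smul, smul_eq_mul, Complex.mul_re, ha] using h
  have c2 : (star u ⬝ᵥ (H0 + Complex.I • Δ'').mulVec z).re
        - (star z ⬝ᵥ (Δ' - HM).mulVec z).re = E * b := by
    have h := congrArg (fun t => (star z ⬝ᵥ t).re) eqZ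
    simpa [dotProduct_sub, dotProduct_smul, smul_eq_mul, Complex.mul_re, hb, hconj] using h
  -- lower bounds
  have bu : lp * a ≤ (star u ⬝ᵥ (Δ' + HM).mulVec u).re :=
    quad_lower _ hp lp (fun i => hlp ▸ ciInf_le (Set.Finite.bddBelow (Set.finite_range _)) i) u
  have bz : lm * b ≤ (star z ⬝ᵥ (Δ' - HM).mulVec z).re :=
    quad_lower _ hm lm (fun i => hlm ▸ ciInf_le (Set.Finite.bddBelow (Set.finite_range _)) i) z
  -- nonnegativity and positivity
  have hself : ∀ p : Fin n → ℂ, (star p ⬝ᵥ p).re = ∑ i, Complex.normSq (p i) := by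
    intro p
    simp [dotProduct, Complex.re_sum, Complex.mul_re, Complex.normSq_apply]
  have ha0 : 0 ≤ a := by
    rw [ha, hself]; exact Finset.sum_nonneg fun i _ => Complex.normSq_nonneg _
  have hb0 : 0 ≤ b := by
    rw [hb, hself]; exact Finset.sum_nonneg fun i _ => Complex.normSq_nonneg _
  have hab : 0 < a + b := by
    rcases (lt_or_eq_of_le (by linarith : (0:ℝ) ≤ a + b)) with h | h
    · exact h
    exfalso
    have ha' : a = 0 := by linarith
    have hb' : b = 0 := by linarith
    have hu0 : u = 0 := by
      funext i
      have : ∑ j, Complex.normSq (u j) = 0 := by rw [← hself]; rw [ha] at ha'; exact ha'.symm ▸ ha'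
      have := (Finset.sum_eq_zero_iff_of_nonneg fun j _ => Complex.normSq_nonneg (u j)).mp
        (by rw [← hself u, ← ha]; exact ha') i (Finset.mem_univ i)
      simpa [Complex.normSq_eq_zero] using this
    have hz0 : z = 0 := by
      funext i
      have := (Finset.sum_eq_zero_iff_of_nonneg fun j _ => Complex.normSq_nonneg (z j)).mp
        (by rw [← hself z, ← hb]; exact hb') i (Finset.mem_univ i)
      simpa [Complex.normSq_eq_zero] using this
    apply hv0
    funext j
    have hxi : ∀ i, x i = 0 := by
      intro i
      have h1 := congrFun hu0 i
      have h2 := congrFun hz0 i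
      simp [hu, hz] at h1 h2
      linear_combination (h1 + h2) / 2
    have hyi : ∀ i, y i = 0 := by
      intro i
      have h1 := congrFun hu0 i
      have h2 := congrFun hz0 i
      simp [hu, hz] at h1 h2
      linear_combination (h1 - h2) / 2
    have hws : ∀ s, w s = 0 := by
      rintro (i | i)
      · exact hxi i
      · exact hyi i
    have := hws (finSumFinEquiv.symm j)
    simpa [hw] using this
  -- final arithmetic
  have key : (star u ⬝ᵥ (Δ' + HM).mulVec u).re + (star z ⬝ᵥ (Δ' - HM).mulVec z).re
      = E * a - E * b := by
    linarith [c1, c2]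
  have h1 : 0 < (lp - E) * a + (lm + E) * b := by
    by_cases hA0 : 0 < a
    · have t1 := mul_pos (by linarith : (0:ℝ) < lp - E) hA0
      have t2 := mul_nonneg (by linarith : (0:ℝ) ≤ lm + E) hb0
      linarith
    · have hbpos : 0 < b := by
        have : a = 0 := le_antisymm (not_lt.mp hA0) ha0
        linarith
      have t1 := mul_pos (by linarith : (0:ℝ) < lm + E) hbpos
      have t2 := mul_nonneg (by linarith : (0:ℝ) ≤ lp - E) ha0
      linarith
  nlinarith [bu, bz, key, h1]
end

section
/- Weyl's eigenvalue perturbation inequality: if H and P are Hermitian n×n matrices with the operator norm of P at most δ, then for each index i, the i-th eigenvalues (ordered increasingly) of H and H + P satisfy |λ_i(H + P) − λ_i(H)| ≤ δ. -/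
open Matrix

/-- The eigenvalues of a Hermitian matrix, sorted in increasing order. -/
noncomputable def sortedEigenvalues {n : ℕ} {H : Matrix (Fin n) (Fin n) ℂ}
    (hH : H.IsHermitian) : Fin n → ℝ :=
  hH.eigenvalues ∘ Tuple.sort hH.eigenvalues

open Finset
open scoped InnerProductSpace
noncomputable section
variable {n : ℕ}

lemma clm_apply_basis (A : Matrix (Fin n) (Fin n) ℂ) (hA : A.IsHermitian) (j : Fin n) :
    Matrix.toEuclideanCLM (𝕜 := ℂ) A (hA.eigenvectorBasis j)
      = (hA.eigenvalues j : ℂ) • hA.eigenvectorBasis j := by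
  apply (WithLp.equiv 2 (Fin n → ℂ)).injective
  simp only [WithLp.equiv_apply]
  rw [Matrix.ofLp_toEuclideanCLM]
  simp [hA.mulVec_eigenvectorBasis]

lemma inner_clm_eq_sum (A : Matrix (Fin n) (Fin n) ℂ) (hA : A.IsHermitian)
    (x : EuclideanSpace ℂ (Fin n)) :
    RCLike.re (⟪x, Matrix.toEuclideanCLM (𝕜 := ℂ) A x⟫_ℂ)
      = ∑ j, hA.eigenvalues j * ‖hA.eigenvectorBasis.repr x j‖ ^ 2 := by
  set B := hA.eigenvectorBasis with hB
  have key : ⟪x, Matrix.toEuclideanCLM (𝕜 := ℂ) A x⟫_ℂ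
      = ∑ j, (hA.eigenvalues j : ℂ) * (B.repr x j * (starRingEnd ℂ) (B.repr x j)) := by
    conv_lhs => rw [← B.sum_repr x, map_sum]
    rw [inner_sum]
    refine Finset.sum_congr rfl fun j _ => ?_
    rw [_root_.map_smul, clm_apply_basis A hA, smul_smul, inner_smul_right, B.sum_repr x,
      ← inner_conj_symm x (B j), B.repr_apply_apply]
    ring
  rw [key, map_sum]
  refine Finset.sum_congr rfl fun j _ => ?_
  rw [Complex.mul_conj', ← Complex.ofReal_pow, ← Complex.ofReal_mul]; exact RCLike.ofReal_re _

lemma norm_sq_eq_sum (B : OrthonormalBasis (Fin n) ℂ (EuclideanSpace ℂ (Fin n)))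
    (x : EuclideanSpace ℂ (Fin n)) : ‖x‖ ^ 2 = ∑ j, ‖B.repr x j‖ ^ 2 := by
  rw [← B.repr.norm_map x]
  exact PiLp.norm_sq_eq_of_L2 _ (B.repr x)

lemma repr_eq_zero_of_mem_span (B : OrthonormalBasis (Fin n) ℂ (EuclideanSpace ℂ (Fin n)))
    (s : Finset (Fin n)) (x : EuclideanSpace ℂ (Fin n))
    (hx : x ∈ Submodule.span ℂ (B '' (s : Set (Fin n)))) (j : Fin n) (hj : j ∉ s) :
    B.repr x j = 0 := by
  have hle : Submodule.span ℂ (B '' (s : Set (Fin n))) ≤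
      LinearMap.ker ((EuclideanSpace.projₗ j : EuclideanSpace ℂ (Fin n) →ₗ[ℂ] ℂ).comp
        (B.repr.toLinearEquiv : EuclideanSpace ℂ (Fin n) →ₗ[ℂ] EuclideanSpace ℂ (Fin n))) := by
    rw [Submodule.span_le]
    rintro v ⟨k, hk, rfl⟩
    simp only [SetLike.mem_coe, LinearMap.mem_ker, LinearMap.comp_apply]
    show B.repr (B k) j = 0
    rw [B.repr_self k, EuclideanSpace.single_apply]
    exact if_neg (by rintro rfl; exact hj hk)
  have := hle hx
  simpa using this

lemma finrank_span_basis_image (B : OrthonormalBasis (Fin n) ℂ (EuclideanSpace ℂ (Fin n)))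
    (s : Finset (Fin n)) :
    Module.finrank ℂ (Submodule.span ℂ (B '' (s : Set (Fin n)))) = s.card := by
  have h1 : LinearIndependent ℂ ((↑) : (B '' (s : Set (Fin n))) → EuclideanSpace ℂ (Fin n)) :=
    (linearIndepOn_iff_image ((B.orthonormal.linearIndependent.injective).injOn)).mp
      (B.orthonormal.linearIndependent.comp _ Subtype.coe_injective)
  classical
  haveI : Fintype (B '' (s : Set (Fin n))) := ((s : Set (Fin n)).toFinite.image _).fintype
  rw [finrank_span_set_eq_card h1, Set.toFinset_image,
    Finset.card_image_of_injective _ B.orthonormal.linearIndependent.injective]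
  simp

lemma weyl_le (A B : Matrix (Fin n) (Fin n) ℂ) (hA : A.IsHermitian)
    (hAB : (A + B).IsHermitian) (δ : ℝ)
    (hδ : ‖Matrix.toEuclideanCLM (𝕜 := ℂ) B‖ ≤ δ) (i : Fin n) :
    sortedEigenvalues hAB i ≤ sortedEigenvalues hA i + δ := by
  classical
  set σ := Tuple.sort hA.eigenvalues with hσ
  set τ := Tuple.sort hAB.eigenvalues with hτ
  set u := hA.eigenvectorBasis
  set v := hAB.eigenvectorBasis
  set s : Finset (Fin n) := (Finset.Iic i).image σ with hs
  set t : Finset (Fin n) := (Finset.Ici i).image τ with ht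
  set V := Submodule.span ℂ (u '' (s : Set (Fin n)))
  set W := Submodule.span ℂ (v '' (t : Set (Fin n)))
  have hVrank : Module.finrank ℂ V = i + 1 := by
    rw [finrank_span_basis_image, hs, Finset.card_image_of_injective _ σ.injective,
      Fin.card_Iic]
  have hWrank : Module.finrank ℂ W = n - i := by
    rw [finrank_span_basis_image, ht, Finset.card_image_of_injective _ τ.injective,
      Fin.card_Ici]
  -- intersection is nontrivial
  have hdim : 0 < Module.finrank ℂ (V ⊓ W : Submodule ℂ (EuclideanSpace ℂ (Fin n))) := by
    have h1 := Submodule.finrank_sup_add_finrank_inf_eq V W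
    have h2 : Module.finrank ℂ (V ⊔ W : Submodule ℂ (EuclideanSpace ℂ (Fin n))) ≤ n := by
      have := Submodule.finrank_le (V ⊔ W)
      simpa [finrank_euclideanSpace] using this
    have hi := i.isLt
    omega
  obtain ⟨⟨x, hxVW⟩, hx0⟩ := Module.finrank_pos_iff_exists_ne_zero.mp hdim
  have hx : x ≠ 0 := by simpa using hx0
  obtain ⟨hxV, hxW⟩ := Submodule.mem_inf.mp hxVW
  have hxnorm : (0:ℝ) < ‖x‖ ^ 2 := pow_pos (norm_pos_iff.mpr hx) 2
  -- upper bound for A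
  have hAbound : RCLike.re (⟪x, Matrix.toEuclideanCLM (𝕜 := ℂ) A x⟫_ℂ)
      ≤ hA.eigenvalues (σ i) * ‖x‖ ^ 2 := by
    rw [inner_clm_eq_sum A hA, norm_sq_eq_sum u, Finset.mul_sum]
    refine Finset.sum_le_sum fun j _ => ?_
    by_cases hjs : j ∈ s
    · obtain ⟨k, hk, rfl⟩ := Finset.mem_image.mp hjs
      have : hA.eigenvalues (σ k) ≤ hA.eigenvalues (σ i) :=
        Tuple.monotone_sort hA.eigenvalues (Finset.mem_Iic.mp hk)
      nlinarith [sq_nonneg ‖u.repr x (σ k)‖]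
    · rw [repr_eq_zero_of_mem_span u s x hxV j hjs]
      simp
  -- lower bound for A+B
  have hABbound : hAB.eigenvalues (τ i) * ‖x‖ ^ 2
      ≤ RCLike.re (⟪x, Matrix.toEuclideanCLM (𝕜 := ℂ) (A + B) x⟫_ℂ) := by
    rw [inner_clm_eq_sum (A + B) hAB, norm_sq_eq_sum v, Finset.mul_sum]
    refine Finset.sum_le_sum fun j _ => ?_
    by_cases hjt : j ∈ t
    · obtain ⟨k, hk, rfl⟩ := Finset.mem_image.mp hjt
      have : hAB.eigenvalues (τ i) ≤ hAB.eigenvalues (τ k) :=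
        Tuple.monotone_sort hAB.eigenvalues (Finset.mem_Ici.mp hk)
      nlinarith [sq_nonneg ‖v.repr x (τ k)‖]
    · rw [repr_eq_zero_of_mem_span v t x hxW j hjt]
      simp
  -- perturbation bound
  have hBbound : RCLike.re (⟪x, Matrix.toEuclideanCLM (𝕜 := ℂ) B x⟫_ℂ) ≤ δ * ‖x‖ ^ 2 := by
    have h1 : RCLike.re (⟪x, Matrix.toEuclideanCLM (𝕜 := ℂ) B x⟫_ℂ)
        ≤ ‖(⟪x, Matrix.toEuclideanCLM (𝕜 := ℂ) B x⟫_ℂ)‖ := RCLike.re_le_norm _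
    have h2 : ‖(⟪x, Matrix.toEuclideanCLM (𝕜 := ℂ) B x⟫_ℂ)‖
        ≤ ‖x‖ * ‖Matrix.toEuclideanCLM (𝕜 := ℂ) B x‖ := norm_inner_le_norm _ _
    have h3 : ‖Matrix.toEuclideanCLM (𝕜 := ℂ) B x‖
        ≤ ‖Matrix.toEuclideanCLM (𝕜 := ℂ) B‖ * ‖x‖ := (Matrix.toEuclideanCLM (𝕜 := ℂ) B).le_opNorm x
    nlinarith [norm_nonneg x, norm_nonneg (Matrix.toEuclideanCLM (𝕜 := ℂ) B x),
      norm_nonneg (Matrix.toEuclideanCLM (𝕜 := ℂ) B)]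
  have hsplit : RCLike.re (⟪x, Matrix.toEuclideanCLM (𝕜 := ℂ) (A + B) x⟫_ℂ)
      = RCLike.re (⟪x, Matrix.toEuclideanCLM (𝕜 := ℂ) A x⟫_ℂ)
        + RCLike.re (⟪x, Matrix.toEuclideanCLM (𝕜 := ℂ) B x⟫_ℂ) := by
    rw [map_add]
    simp [inner_add_right]
  have hfinal : hAB.eigenvalues (τ i) * ‖x‖ ^ 2
      ≤ (hA.eigenvalues (σ i) + δ) * ‖x‖ ^ 2 := by
    calc hAB.eigenvalues (τ i) * ‖x‖ ^ 2 ≤ _ := hABbound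
    _ = _ := hsplit
    _ ≤ (hA.eigenvalues (σ i) + δ) * ‖x‖ ^ 2 := by nlinarith
  have := le_of_mul_le_mul_right (by linarith [hfinal] : hAB.eigenvalues (τ i) * ‖x‖^2 ≤ (hA.eigenvalues (σ i) + δ) * ‖x‖^2) hxnorm
  simpa [sortedEigenvalues, hσ, hτ] using this

lemma sortedEigenvalues_congr {A A' : Matrix (Fin n) (Fin n) ℂ} (h : A = A')
    (hA : A.IsHermitian) (hA' : A'.IsHermitian) :
    sortedEigenvalues hA = sortedEigenvalues hA' := by
  subst h; rfl

theorem stmt_6 {n : ℕ} (H P : Matrix (Fin n) (Fin n) ℂ)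
    (hH : H.IsHermitian) (hP : P.IsHermitian)
    (hHP : (H + P).IsHermitian)
    (δ : ℝ) (hnorm : ‖Matrix.toEuclideanCLM (𝕜 := ℂ) P‖ ≤ δ) :
    ∀ i : Fin n, |sortedEigenvalues hHP i - sortedEigenvalues hH i| ≤ δ := by
  intro i
  rw [abs_sub_le_iff]
  constructor
  · linarith [weyl_le H P hH hHP δ hnorm i]
  · have hH' : ((H + P) + (-P)).IsHermitian := by simpa using hH
    have hnorm' : ‖Matrix.toEuclideanCLM (𝕜 := ℂ) (-P)‖ ≤ δ := by
      rw [map_neg, norm_neg]; exact hnorm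
    have := weyl_le (H + P) (-P) hHP hH' δ hnorm' i
    rw [sortedEigenvalues_congr (by abel : (H + P) + (-P) = H) hH' hH] at this
    linarith
end
end
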